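/- A directed graph with nonnegative weighted adjacency matrix A is acyclic if and only if the Hadamard (entrywise) product A ∘ ∇h(A) is the zero matrix, where ∇h(A) = Σ_{p=1}^d p c_p (A^{p-1})^T with c_p > 0. -/

import Mathlib

open Matrix

/-- The gradient `∇h(A) = Σ_{p=1}^d p c_p (A^{p-1})ᵀ`. -/
noncomputable def gradh {d : ℕ} (c : ℕ → ℝ) (A : Matrix (Fin d) (Fin d) ℝ) :
    Matrix (Fin d) (Fin d) ℝ :=
  ∑ p ∈ Finset.Icc 1 d, ((p : ℝ) * c p) • (A ^ (p - 1))ᵀ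

/-- A directed walk in the graph with edge `(i,j)` iff `A i j > 0`. -/
def IsWalkA {d : ℕ} (A : Matrix (Fin d) (Fin d) ℝ) (p : ℕ) (w : ℕ → Fin d) : Prop :=
  ∀ k < p, 0 < A (w k) (w (k + 1))

/-- The graph of `A` is acyclic. -/
def AcyclicA {d : ℕ} (A : Matrix (Fin d) (Fin d) ℝ) : Prop :=
  ¬ ∃ (p : ℕ) (w : ℕ → Fin d), 0 < p ∧ IsWalkA A p w ∧ w 0 = w p

lemma pow_entry_nonneg {d : ℕ} {A : Matrix (Fin d) (Fin d) ℝ} (hA : ∀ i j, 0 ≤ A i j) :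
    ∀ n i j, 0 ≤ (A ^ n) i j := by
  intro n
  induction n with
  | zero => intro i j; simp [Matrix.one_apply]; split <;> norm_num
  | succ n ih =>
      intro i j
      rw [pow_succ, Matrix.mul_apply]
      exact Finset.sum_nonneg fun k _ => mul_nonneg (ih i k) (hA k j)

lemma walk_pow_pos {d : ℕ} {A : Matrix (Fin d) (Fin d) ℝ} (hA : ∀ i j, 0 ≤ A i j) :
    ∀ n (w : ℕ → Fin d), IsWalkA A n w → 0 < (A ^ n) (w 0) (w n) := by
  intro n
  induction n with
  | zero => intro w _; simp [Matrix.one_apply]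
  | succ n ih =>
      intro w hw
      have h1 : 0 < (A ^ n) (w 0) (w n) := ih w fun k hk => hw k (by omega)
      have h2 : 0 < A (w n) (w (n + 1)) := hw n (by omega)
      rw [pow_succ, Matrix.mul_apply]
      refine Finset.sum_pos' (fun k _ => mul_nonneg (pow_entry_nonneg hA n _ _) (hA _ _)) ?_
      exact ⟨w n, Finset.mem_univ _, mul_pos h1 h2⟩

lemma pow_pos_walk {d : ℕ} {A : Matrix (Fin d) (Fin d) ℝ} (hA : ∀ i j, 0 ≤ A i j) :
    ∀ n i j, 0 < (A ^ n) i j → ∃ w : ℕ → Fin d, w 0 = i ∧ w n = j ∧ IsWalkA A n w := by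
  intro n
  induction n with
  | zero =>
      intro i j h
      have hij : i = j := by
        by_contra hne
        simp [Matrix.one_apply, hne] at h
      exact ⟨fun _ => i, rfl, hij ▸ rfl, fun k hk => by omega⟩
  | succ n ih =>
      intro i j h
      rw [pow_succ, Matrix.mul_apply] at h
      obtain ⟨k, -, hk⟩ : ∃ k ∈ Finset.univ, (A ^ n) i k * A k j ≠ 0 := by
        by_contra hall
        push_neg at hall
        rw [Finset.sum_eq_zero hall] at h
        exact lt_irrefl 0 h
      have h1 : 0 < (A ^ n) i k :=
        lt_of_le_of_ne (pow_entry_nonneg hA n i k) (fun e => hk (by rw [← e]; ring))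
      have h2 : 0 < A k j :=
        lt_of_le_of_ne (hA k j) (fun e => hk (by rw [← e]; ring))
      obtain ⟨w, hw0, hwn, hw⟩ := ih i k h1
      refine ⟨fun m => if m = n + 1 then j else w m, by simp [hw0], by simp, ?_⟩
      intro m hm
      rcases Nat.lt_or_ge m n with hmn | hmn
      · have : m ≠ n + 1 := by omega
        have : m + 1 ≠ n + 1 := by omega
        simpa [‹m ≠ n + 1›, this, Nat.ne_of_lt hmn] using hw m hmn
      · have hmn' : m = n := by omega
        subst hmn'
        simpa [Nat.succ_ne_self, hwn] using h2

theorem stmt9 {d : ℕ} (c : ℕ → ℝ) (hc : ∀ p ∈ Finset.Icc 1 d, 0 < c p)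
    (A : Matrix (Fin d) (Fin d) ℝ) (hA : ∀ i j, 0 ≤ A i j) :
    AcyclicA A ↔ Matrix.hadamard A (gradh c A) = 0 := by
  have hgrad : ∀ i j, gradh c A i j =
      ∑ p ∈ Finset.Icc 1 d, (p : ℝ) * c p * (A ^ (p - 1)) j i := by
    intro i j
    simp [gradh, Matrix.sum_apply, mul_assoc, ← Matrix.transpose_pow]
  constructor
  · intro hac
    ext i j
    simp only [Matrix.hadamard_apply, Matrix.zero_apply]
    rcases eq_or_lt_of_le (hA i j) with h0 | hpos
    · rw [← h0]; ring
    · have : gradh c A i j = 0 := by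
        rw [hgrad]
        refine Finset.sum_eq_zero fun p hp => ?_
        have hp1 : 1 ≤ p := (Finset.mem_Icc.mp hp).1
        have hentry : (A ^ (p - 1)) j i = 0 := by
          by_contra hne
          have hpos' : 0 < (A ^ (p - 1)) j i :=
            lt_of_le_of_ne (pow_entry_nonneg hA _ _ _) (Ne.symm hne)
          obtain ⟨w, hw0, hwn, hw⟩ := pow_pos_walk hA (p - 1) j i hpos'
          apply hac
          refine ⟨p, fun m => if m = 0 then i else w (m - 1), by omega, ?_, ?_⟩
          · intro m hm
            rcases Nat.eq_zero_or_pos m with rfl | hm0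
            · simpa [hw0] using hpos
            · have hm1 : m ≠ 0 := by omega
              have : m + 1 ≠ 0 := by omega
              simp only [hm1, this, if_false]
              have := hw (m - 1) (by omega)
              have e : m - 1 + 1 = m + 1 - 1 := by omega
              rwa [e] at this
          · have : p ≠ 0 := by omega
            simp [this, ← hwn]
        rw [hentry]; ring
      rw [this]; ring
  · intro h0
    rintro ⟨p, w, hp, hw, hcyc⟩
    -- periodic extension
    set W : ℕ → Fin d := fun k => w (k % p) with hWdef
    have hstep : ∀ k, W (k + 1) = w (k % p + 1) := by
      intro k
      have key : (k % p + 1) % p = (k + 1) % p := (Nat.mod_modEq k p).add_right 1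
      have hk : k % p < p := Nat.mod_lt _ hp
      rcases Nat.lt_or_ge (k % p + 1) p with h | h
      · simp only [hWdef, ← key, Nat.mod_eq_of_lt h]
      · have e : k % p + 1 = p := by omega
        simp only [hWdef, ← key, e, Nat.mod_self]
        rw [hcyc]
    have hWwalk : ∀ k, 0 < A (W k) (W (k + 1)) := by
      intro k
      rw [hstep]
      exact hw (k % p) (Nat.mod_lt _ hp)
    -- pigeonhole: two equal among W 0, ..., W d
    obtain ⟨x, y, hxy, hfxy⟩ :=
      Fintype.exists_ne_map_eq_of_card_lt (fun m : Fin (d + 1) => W (m : ℕ)) (by simp)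
    obtain ⟨a, b, hab, hWab⟩ : ∃ a b : ℕ, a < b ∧ b ≤ d ∧ W a = W b := by
      rcases lt_or_gt_of_ne hxy with h | h
      · exact ⟨(x : ℕ), (y : ℕ), h, Nat.lt_succ_iff.mp y.isLt, hfxy⟩
      · exact ⟨(y : ℕ), (x : ℕ), h, Nat.lt_succ_iff.mp x.isLt, hfxy.symm⟩
    obtain ⟨hbd, hWab⟩ := hWab
    set q : ℕ := b - a with hq
    have hq1 : 1 ≤ q := by omega
    have hqd : q ≤ d := by omega
    -- the shifted cycle
    have hedge : 0 < A (W a) (W (a + 1)) := hWwalk a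
    have hback : 0 < (A ^ (q - 1)) (W (a + 1)) (W a) := by
      have hwalk : IsWalkA A (q - 1) (fun k => W (a + 1 + k)) := by
        intro k _
        show 0 < A (W (a + 1 + k)) (W (a + 1 + (k + 1)))
        have e : a + 1 + (k + 1) = a + 1 + k + 1 := by ring
        rw [e]
        exact hWwalk (a + 1 + k)
      have := walk_pow_pos hA (q - 1) (fun k => W (a + 1 + k)) hwalk
      simp only [Nat.add_zero] at this
      have e : a + 1 + (q - 1) = b := by omega
      rwa [e, ← hWab] at this
    have hgpos : 0 < gradh c A (W a) (W (a + 1)) := by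
      rw [hgrad]
      refine Finset.sum_pos' (fun r hr => ?_) ⟨q, Finset.mem_Icc.mpr ⟨hq1, hqd⟩, ?_⟩
      · have hr1 := (Finset.mem_Icc.mp hr).1
        exact mul_nonneg (mul_nonneg (by positivity) (hc r hr).le)
          (pow_entry_nonneg hA _ _ _)
      · refine mul_pos (mul_pos ?_ (hc q (Finset.mem_Icc.mpr ⟨hq1, hqd⟩))) hback
        have h1 : (1 : ℝ) ≤ (q : ℝ) := by exact_mod_cast hq1
        linarith
    have hzero : A (W a) (W (a + 1)) * gradh c A (W a) (W (a + 1)) = 0 := by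
      have := congrFun (congrFun h0 (W a)) (W (a + 1))
      simpa [Matrix.hadamard_apply] using this
    exact absurd hzero (ne_of_gt (mul_pos hedge hgpos))
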